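/- Suppose n simple complex Lie algebras 𝔤₁,...,𝔤ₙ with dual Coxeter numbers h₁^∨,...,hₙ^∨ and positive rational levels k₁,...,kₙ satisfy h_i^∨/k_i = (d−24)/24 for all i, where d = Σᵢ dim 𝔤ᵢ > 24. Then the number of possible families of pairs (𝔤ᵢ, kᵢ) (up to isomorphism and reordering) with all kᵢ positive integers is finite. -/
import Mathlib


/-- The types of finite-dimensional complex simple Lie algebras (with the usual
rank restrictions so that each isomorphism class appears exactly once). -/
inductive SimpleLieType : Type
  | A : {n : ℕ // 1 ≤ n} → SimpleLieType
  | B : {n : ℕ // 2 ≤ n} → SimpleLieType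
  | C : {n : ℕ // 3 ≤ n} → SimpleLieType
  | D : {n : ℕ // 4 ≤ n} → SimpleLieType
  | E6 : SimpleLieType
  | E7 : SimpleLieType
  | E8 : SimpleLieType
  | F4 : SimpleLieType
  | G2 : SimpleLieType

/-- The dimension of the simple Lie algebra of the given type. -/
def SimpleLieType.dim : SimpleLieType → ℕ
  | A n => n.1 ^ 2 + 2 * n.1
  | B n => 2 * n.1 ^ 2 + n.1
  | C n => 2 * n.1 ^ 2 + n.1
  | D n => 2 * n.1 ^ 2 - n.1
  | E6 => 78
  | E7 => 133
  | E8 => 248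
  | F4 => 52
  | G2 => 14

/-- The dual Coxeter number `h^∨` of the simple Lie algebra of the given type. -/
def SimpleLieType.dualCoxeter : SimpleLieType → ℕ
  | A n => n.1 + 1
  | B n => 2 * n.1 - 1
  | C n => n.1 + 1
  | D n => 2 * n.1 - 2
  | E6 => 12
  | E7 => 18
  | E8 => 30
  | F4 => 9
  | G2 => 4

lemma SimpleLieType.three_le_dim (t : SimpleLieType) : 3 ≤ t.dim := by
  cases t with
  | A n => have h := n.2; have h2 : n.1 ≤ n.1^2 := Nat.le_self_pow (by norm_num) _
           simp only [dim]; omega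
  | B n => have h := n.2; have h2 : n.1 ≤ n.1^2 := Nat.le_self_pow (by norm_num) _
           simp only [dim]; omega
  | C n => have h := n.2; have h2 : n.1 ≤ n.1^2 := Nat.le_self_pow (by norm_num) _
           simp only [dim]; omega
  | D n => have h := n.2; have h2 : n.1 ≤ n.1^2 := Nat.le_self_pow (by norm_num) _
           simp only [dim]; omega
  | E6 => norm_num [dim]
  | E7 => norm_num [dim]
  | E8 => norm_num [dim]
  | F4 => norm_num [dim]
  | G2 => norm_num [dim]

lemma SimpleLieType.sq_dualCoxeter_le (t : SimpleLieType) :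
    t.dualCoxeter ^ 2 ≤ 4 * t.dim := by
  cases t with
  | A n =>
      have h := n.2
      simp only [dim, dualCoxeter]
      nlinarith [n.1 * n.1]
  | B n =>
      obtain ⟨m, hm⟩ := Nat.exists_eq_add_of_le n.2
      simp only [dim, dualCoxeter, hm]
      have e1 : (2*(2+m)-1)^2 = 4*(m^2)+12*m+9 := by
        have h : 2*(2+m)-1 = 2*m+3 := by omega
        rw [h]; ring
      have e2 : 2*(2+m)^2+(2+m) = 2*(m^2)+9*m+10 := by ring
      rw [e1, e2]
      generalize m^2 = k
      omega
  | C n =>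
      have h := n.2
      simp only [dim, dualCoxeter]
      nlinarith
  | D n =>
      obtain ⟨m, hm⟩ := Nat.exists_eq_add_of_le n.2
      simp only [dim, dualCoxeter, hm]
      have e1 : (2*(4+m)-2)^2 = 4*(m^2)+24*m+36 := by
        have h : 2*(4+m)-2 = 2*m+6 := by omega
        rw [h]; ring
      have e2 : 2*(4+m)^2 = 2*(m^2)+16*m+32 := by ring
      rw [e1, e2]
      generalize m^2 = k
      omega
  | E6 => norm_num [dim, dualCoxeter]
  | E7 => norm_num [dim, dualCoxeter]
  | E8 => norm_num [dim, dualCoxeter]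
  | F4 => norm_num [dim, dualCoxeter]
  | G2 => norm_num [dim, dualCoxeter]

lemma SimpleLieType.dualCoxeter_le_dim (t : SimpleLieType) :
    t.dualCoxeter ≤ t.dim := by
  cases t with
  | A n => have h := n.2; have h2 : 1 ≤ n.1^2 := Nat.one_le_pow _ _ (by omega)
           simp only [dim, dualCoxeter]; omega
  | B n => have h := n.2; have h2 : n.1 ≤ n.1^2 := Nat.le_self_pow (by norm_num) _
           simp only [dim, dualCoxeter]; omega
  | C n => have h := n.2; have h2 : 1 ≤ n.1^2 := Nat.one_le_pow _ _ (by omega)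
           simp only [dim, dualCoxeter]; omega
  | D n => have h := n.2; have h2 : 2*n.1 ≤ n.1^2 := by nlinarith
           simp only [dim, dualCoxeter]; omega
  | E6 => norm_num [dim, dualCoxeter]
  | E7 => norm_num [dim, dualCoxeter]
  | E8 => norm_num [dim, dualCoxeter]
  | F4 => norm_num [dim, dualCoxeter]
  | G2 => norm_num [dim, dualCoxeter]

/-- decode a (tag, rank) pair into a simple Lie type -/
def SimpleLieType.dec : ℕ × ℕ → SimpleLieType
  | (0, n) => .A ⟨max n 1, le_max_right _ _⟩
  | (1, n) => .B ⟨max n 2, le_max_right _ _⟩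
  | (2, n) => .C ⟨max n 3, le_max_right _ _⟩
  | (3, n) => .D ⟨max n 4, le_max_right _ _⟩
  | (4, _) => .E6
  | (5, _) => .E7
  | (6, _) => .E8
  | (7, _) => .F4
  | (_, _) => .G2

lemma SimpleLieType.types_finite : {t : SimpleLieType | t.dim ≤ 2352}.Finite := by
  apply Set.Finite.subset ((Set.finite_Iic ((8, 2352) : ℕ × ℕ)).image SimpleLieType.dec)
  rintro t ht
  simp only [Set.mem_setOf_eq] at ht
  cases t with
  | A n =>
      refine ⟨(0, n.1), ⟨by norm_num, ?_⟩, ?_⟩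
      · have : n.1 ≤ n.1^2 + 2*n.1 := by nlinarith [sq_nonneg n.1]
        exact le_trans this ht
      · show SimpleLieType.A _ = _
        congr 1
        exact Subtype.ext (max_eq_left n.2)
  | B n =>
      refine ⟨(1, n.1), ⟨by norm_num, ?_⟩, ?_⟩
      · have : n.1 ≤ 2*n.1^2 + n.1 := by nlinarith
        exact le_trans this ht
      · show SimpleLieType.B _ = _
        congr 1
        exact Subtype.ext (max_eq_left n.2)
  | C n =>
      refine ⟨(2, n.1), ⟨by norm_num, ?_⟩, ?_⟩
      · have : n.1 ≤ 2*n.1^2 + n.1 := by nlinarith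
        exact le_trans this ht
      · show SimpleLieType.C _ = _
        congr 1
        exact Subtype.ext (max_eq_left n.2)
  | D n =>
      refine ⟨(3, n.1), ⟨by norm_num, ?_⟩, ?_⟩
      · have h2 : 2*n.1 ≤ n.1^2 := by nlinarith [n.2]
        have : n.1 ≤ 2*n.1^2 - n.1 := by omega
        exact le_trans this ht
      · show SimpleLieType.D _ = _
        congr 1
        exact Subtype.ext (max_eq_left n.2)
  | E6 => exact ⟨(4, 0), ⟨by norm_num, by norm_num⟩, rfl⟩
  | E7 => exact ⟨(5, 0), ⟨by norm_num, by norm_num⟩, rfl⟩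
  | E8 => exact ⟨(6, 0), ⟨by norm_num, by norm_num⟩, rfl⟩
  | F4 => exact ⟨(7, 0), ⟨by norm_num, by norm_num⟩, rfl⟩
  | G2 => exact ⟨(8, 0), ⟨by norm_num, by norm_num⟩, rfl⟩

lemma pairs_finite :
    {p : SimpleLieType × ℕ+ | p.1.dim ≤ 2352 ∧ (p.2 : ℕ) ≤ 56448}.Finite := by
  have hk : {k : ℕ+ | (k : ℕ) ≤ 56448}.Finite := by
    have : {k : ℕ+ | (k : ℕ) ≤ 56448} = (fun k : ℕ+ => (k : ℕ)) ⁻¹' Set.Iic 56448 := rfl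
    rw [this]
    exact Set.Finite.preimage (PNat.coe_injective.injOn)
      (Set.finite_Iic 56448)
  exact Set.Finite.subset (SimpleLieType.types_finite.prod hk)
    (fun p hp => ⟨hp.1, hp.2⟩)

lemma mem_le_sum (s : Multiset ℕ) (a : ℕ) (h : a ∈ s) : a ≤ s.sum := by
  obtain ⟨t, rfl⟩ := Multiset.exists_cons_of_mem h
  simp


/-- Suppose simple complex Lie algebras `𝔤₁, …, 𝔤ₙ` with dual Coxeter numbers
`hᵢ^∨` and positive integer levels `kᵢ` satisfy `hᵢ^∨ / kᵢ = (d - 24)/24` for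
all `i`, where `d = Σᵢ dim 𝔤ᵢ > 24`.  Then the number of possible families of
pairs `(𝔤ᵢ, kᵢ)` — up to isomorphism and reordering, so modelled as multisets of
pairs (simple type, level) — is finite. -/
theorem finitely_many_families :
    {F : Multiset (SimpleLieType × ℕ+) |
      24 < (F.map (fun p => p.1.dim)).sum ∧
      ∀ p ∈ F, 24 * p.1.dualCoxeter =
        (p.2 : ℕ) * ((F.map (fun p => p.1.dim)).sum - 24)}.Finite := by
  classical
  set T : Finset (SimpleLieType × ℕ+) := pairs_finite.toFinset with hT
  apply Set.Finite.subset (Set.finite_Iic (784 • T.val))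
  rintro F ⟨hd, hk⟩
  set d := (F.map (fun p => p.1.dim)).sum with hdd
  -- F is nonempty
  have hF0 : F ≠ 0 := by
    rintro rfl
    simp [hdd] at hd
  obtain ⟨q, hq⟩ := Multiset.exists_mem_of_ne_zero hF0
  -- each dim is at most d
  have hdim_le : ∀ p ∈ F, p.1.dim ≤ d :=
    fun p hp => mem_le_sum _ _ (Multiset.mem_map.2 ⟨p, hp, rfl⟩)
  -- d is bounded
  have hd2352 : d ≤ 2352 := by
    have h1 := hk q hq
    have h2 : d - 24 ≤ 24 * q.1.dualCoxeter := by
      have := q.2.2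
      calc d - 24 ≤ (q.2 : ℕ) * (d - 24) := Nat.le_mul_of_pos_left _ q.2.2
        _ = 24 * q.1.dualCoxeter := h1.symm
    have h3 : (d - 24)^2 ≤ 2304 * d := by
      calc (d - 24)^2 ≤ (24 * q.1.dualCoxeter)^2 := Nat.pow_le_pow_left h2 2
        _ = 576 * q.1.dualCoxeter^2 := by ring
        _ ≤ 576 * (4 * q.1.dim) := by
            exact Nat.mul_le_mul_left _ (SimpleLieType.sq_dualCoxeter_le q.1)
        _ = 2304 * q.1.dim := by ring
        _ ≤ 2304 * d := Nat.mul_le_mul_left _ (hdim_le q hq)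
    obtain ⟨m, hm⟩ : ∃ m, d = 25 + m := ⟨d - 25, by omega⟩
    rw [hm] at h3
    have h4 : (1 + m)^2 ≤ 2304 * (25 + m) := by
      have he : (25 + m) - 24 = 1 + m := by omega
      rwa [he] at h3
    rw [hm]
    nlinarith
  -- card bound
  have hcard : Multiset.card F ≤ 784 := by
    have h1 : Multiset.card (F.map (fun p => p.1.dim)) • 3 ≤ d :=
      Multiset.card_nsmul_le_sum (fun x hx => by
        obtain ⟨p, _, rfl⟩ := Multiset.mem_map.1 hx
        exact SimpleLieType.three_le_dim p.1)
    rw [Multiset.card_map, smul_eq_mul] at h1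
    omega
  -- each element is in T
  have hmemT : ∀ p ∈ F, p ∈ T := by
    intro p hp
    rw [hT, Set.Finite.mem_toFinset]
    refine ⟨le_trans (hdim_le p hp) hd2352, ?_⟩
    have h1 := hk p hp
    have h2 : (p.2 : ℕ) ≤ (p.2 : ℕ) * (d - 24) := Nat.le_mul_of_pos_right _ (by omega)
    have h3 : (p.2 : ℕ) * (d - 24) ≤ 56448 := by
      rw [← h1]
      have := le_trans (SimpleLieType.dualCoxeter_le_dim p.1)
        (le_trans (hdim_le p hp) hd2352)
      omega
    exact le_trans h2 h3
  -- conclude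
  simp only [Set.mem_Iic]
  rw [Multiset.le_iff_count]
  intro a
  rw [Multiset.count_nsmul]
  by_cases ha : a ∈ F
  · rw [Multiset.count_eq_one_of_mem T.nodup (hmemT a ha)]
    calc F.count a ≤ Multiset.card F := Multiset.count_le_card a F
      _ ≤ 784 := hcard
      _ = 784 * 1 := by ring
  · rw [Multiset.count_eq_zero.2 ha]
    exact Nat.zero_le _
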